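/- Let H be a stable transfer function, H_r(s) = Σᵢ ℓᵢrᵢᵀ/(s − λᵢ) with distinct stable poles, and J = ‖H − H_r‖²_{H₂}. Then the gradient of J with respect to the right residue direction r_ℓ equals 2(ℓ_ℓᵀH_r(−λ_ℓ) − ℓ_ℓᵀH(−λ_ℓ))ᵀ, and the gradient with respect to the left residue direction ℓ_ℓ equals 2(H_r(−λ_ℓ)r_ℓ − H(−λ_ℓ)r_ℓ). Consequently, if J is stationary with respect to all residue directions and all poles, then H(−λ_k)r_k = H_r(−λ_k)r_k, ℓ_kᵀH(−λ_k) = ℓ_kᵀH_r(−λ_k), and ℓ_kᵀH'(−λ_k)r_k = ℓ_kᵀH_r'(−λ_k)r_k for all k. -/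

import Mathlib

open Matrix
open scoped Matrix

/-- The H₂ error functional in pole-residue variables:
`J = ‖H‖² - 2 Σ_k ℓ_kᵀ H(-λ_k) r_k + Σ_{k,l} (ℓ_kᵀℓ_l)(r_lᵀr_k)/(-λ_k - λ_l)`
(the constant `c = ‖H‖²_{H₂}` is irrelevant for differentiation). -/
noncomputable def h2J {p m rr : ℕ} (H : ℂ → Matrix (Fin p) (Fin m) ℂ) (c : ℝ)
    (lam : Fin rr → ℂ) (ls : Fin rr → Fin p → ℂ) (rs : Fin rr → Fin m → ℂ) : ℂ :=
  (c : ℂ) - 2 * ∑ k, ls k ⬝ᵥ (H (-(lam k)) *ᵥ rs k)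
    + ∑ k, ∑ l, (ls k ⬝ᵥ ls l) * (rs l ⬝ᵥ rs k) / (-(lam k) - lam l)

section Helpers

lemma dot_upd {n : ℕ} (u w : Fin n → ℂ) (j : Fin n) (t : ℂ) :
    u ⬝ᵥ Function.update w j t = u j * t + (u ⬝ᵥ w - u j * w j) := by
  simp only [dotProduct, Function.update, eq_rec_constant, dite_eq_ite, mul_ite]
  have h : ∀ x : Fin n, (if x = j then u x * t else u x * w x)
      = u x * w x + (if x = j then u x * (t - w x) else 0) := by
    intro x; split <;> ring
  simp only [h, Finset.sum_add_distrib, Finset.sum_ite_eq' Finset.univ j,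
    Finset.mem_univ, if_true]
  ring

lemma hasDerivAt_dot_upd_right {n : ℕ} (u w : Fin n → ℂ) (j : Fin n) (t₀ : ℂ) :
    HasDerivAt (fun t : ℂ => u ⬝ᵥ Function.update w j t) (u j) t₀ := by
  have hf : (fun t : ℂ => u ⬝ᵥ Function.update w j t)
      = fun t => u j * t + (u ⬝ᵥ w - u j * w j) := funext fun t => dot_upd u w j t
  rw [hf]
  simpa using ((hasDerivAt_id t₀).const_mul (u j)).add_const (u ⬝ᵥ w - u j * w j)

lemma hasDerivAt_dot_upd_left {n : ℕ} (u w : Fin n → ℂ) (j : Fin n) (t₀ : ℂ) :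
    HasDerivAt (fun t : ℂ => Function.update w j t ⬝ᵥ u) (u j) t₀ := by
  rw [show (fun t : ℂ => Function.update w j t ⬝ᵥ u)
      = fun t => u ⬝ᵥ Function.update w j t from funext fun t => dotProduct_comm _ _]
  exact hasDerivAt_dot_upd_right u w j t₀

lemma hasDerivAt_dot_upd_both {n : ℕ} (w : Fin n → ℂ) (j : Fin n) (t₀ : ℂ) :
    HasDerivAt (fun t : ℂ => Function.update w j t ⬝ᵥ Function.update w j t)
      (2 * t₀) t₀ := by
  have hf : (fun t : ℂ => Function.update w j t ⬝ᵥ Function.update w j t)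
      = fun t => t * t + (w ⬝ᵥ w - w j * w j) := by
    funext t
    rw [dot_upd (Function.update w j t) w j t, dotProduct_comm, dot_upd,
      Function.update_self]
    ring
  rw [hf]
  have := ((hasDerivAt_id t₀).mul (hasDerivAt_id t₀)).add_const (w ⬝ᵥ w - w j * w j)
  simpa [two_mul] using this

lemma vecMul_sum_apply {p m rr : ℕ} (ls : Fin rr → Fin p → ℂ) (rs : Fin rr → Fin m → ℂ)
    (w : Fin p → ℂ) (f : Fin rr → ℂ) (j : Fin m) :
    (w ᵥ* (∑ b, f b • vecMulVec (ls b) (rs b))) j = ∑ b, f b * (w ⬝ᵥ ls b) * rs b j := by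
  simp only [vecMul, dotProduct, Matrix.sum_apply, Matrix.smul_apply, vecMulVec_apply,
    smul_eq_mul, Finset.mul_sum]
  rw [Finset.sum_comm]
  refine Finset.sum_congr rfl fun b _ => ?_
  simp only [Finset.mul_sum, Finset.sum_mul]
  exact Finset.sum_congr rfl fun i _ => by ring

lemma mulVec_sum_apply {p m rr : ℕ} (ls : Fin rr → Fin p → ℂ) (rs : Fin rr → Fin m → ℂ)
    (v : Fin m → ℂ) (f : Fin rr → ℂ) (j : Fin p) :
    ((∑ b, f b • vecMulVec (ls b) (rs b)) *ᵥ v) j = ∑ b, f b * ls b j * (rs b ⬝ᵥ v) := by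
  simp only [mulVec, dotProduct, Matrix.sum_apply, Matrix.smul_apply, vecMulVec_apply,
    smul_eq_mul, Finset.sum_mul]
  rw [Finset.sum_comm]
  refine Finset.sum_congr rfl fun b _ => ?_
  simp only [Finset.mul_sum, Finset.sum_mul]
  exact Finset.sum_congr rfl fun i _ => by ring

lemma dot_sum_mulVec {p m rr : ℕ} (ls : Fin rr → Fin p → ℂ) (rs : Fin rr → Fin m → ℂ)
    (w : Fin p → ℂ) (v : Fin m → ℂ) (f : Fin rr → ℂ) :
    w ⬝ᵥ ((∑ b, f b • vecMulVec (ls b) (rs b)) *ᵥ v)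
      = ∑ b, f b * (w ⬝ᵥ ls b) * (rs b ⬝ᵥ v) := by
  have h1 : w ⬝ᵥ ((∑ b, f b • vecMulVec (ls b) (rs b)) *ᵥ v)
      = ∑ i, w i * ∑ b, f b * ls b i * (rs b ⬝ᵥ v) := by
    rw [dotProduct]
    exact Finset.sum_congr rfl fun i _ => by rw [mulVec_sum_apply]
  rw [h1]
  simp only [Finset.mul_sum]
  rw [Finset.sum_comm]
  refine Finset.sum_congr rfl fun b _ => ?_
  generalize rs b ⬝ᵥ v = R
  rw [dotProduct]
  simp only [Finset.mul_sum, Finset.sum_mul]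
  exact Finset.sum_congr rfl fun i _ => by ring

end Helpers

/-- Gradients of the H₂ error with respect to the residue directions, and the
resulting first-order (Meier–Luenberger) interpolatory optimality conditions:
`∇_{r_ℓ} J = 2(ℓ_ℓᵀH_r(-λ_ℓ) - ℓ_ℓᵀH(-λ_ℓ))ᵀ`, `∇_{ℓ_ℓ} J = 2(H_r(-λ_ℓ)r_ℓ - H(-λ_ℓ)r_ℓ)`,
and stationarity with respect to all residue directions and all poles implies the
bitangential Hermite interpolation conditions. -/
theorem h2_gradients_and_optimality_conditions
    {p m rr : ℕ}
    (H H' : ℂ → Matrix (Fin p) (Fin m) ℂ)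
    (lam : Fin rr → ℂ) (ls : Fin rr → Fin p → ℂ) (rs : Fin rr → Fin m → ℂ)
    (hdist : Function.Injective lam)
    (hre : ∀ k, (lam k).re < 0)
    (hH' : ∀ k a b, HasDerivAt (fun z => H z a b) (H' (-(lam k)) a b) (-(lam k)))
    (Hr Hr' : ℂ → Matrix (Fin p) (Fin m) ℂ)
    (hHr : ∀ s, Hr s = ∑ j, (s - lam j)⁻¹ • vecMulVec (ls j) (rs j))
    (hHr' : ∀ s, Hr' s = -∑ j, ((s - lam j) ^ 2)⁻¹ • vecMulVec (ls j) (rs j))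
    (c : ℝ) :
    (∀ (k : Fin rr) (j : Fin m),
      HasDerivAt
        (fun t : ℂ => h2J H c lam ls (Function.update rs k (Function.update (rs k) j t)))
        (2 * ((ls k ᵥ* Hr (-(lam k))) j - (ls k ᵥ* H (-(lam k))) j))
        (rs k j)) ∧
    (∀ (k : Fin rr) (j : Fin p),
      HasDerivAt
        (fun t : ℂ => h2J H c lam (Function.update ls k (Function.update (ls k) j t)) rs)
        (2 * ((Hr (-(lam k)) *ᵥ rs k) j - (H (-(lam k)) *ᵥ rs k) j))
        (ls k j)) ∧
    ((∀ (k : Fin rr) (j : Fin m),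
        deriv (fun t : ℂ =>
          h2J H c lam ls (Function.update rs k (Function.update (rs k) j t))) (rs k j) = 0) →
     (∀ (k : Fin rr) (j : Fin p),
        deriv (fun t : ℂ =>
          h2J H c lam (Function.update ls k (Function.update (ls k) j t)) rs) (ls k j) = 0) →
     (∀ k : Fin rr,
        deriv (fun t : ℂ => h2J H c (Function.update lam k t) ls rs) (lam k) = 0) →
     (∀ k, H (-(lam k)) *ᵥ rs k = Hr (-(lam k)) *ᵥ rs k) ∧
     (∀ k, ls k ᵥ* H (-(lam k)) = ls k ᵥ* Hr (-(lam k))) ∧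
     (∀ k, ls k ⬝ᵥ (H' (-(lam k)) *ᵥ rs k) = ls k ⬝ᵥ (Hr' (-(lam k)) *ᵥ rs k))) := by
  have hden : ∀ a b : Fin rr, -(lam a) - lam b ≠ 0 := by
    intro a b h
    have := congrArg Complex.re h
    simp only [Complex.sub_re, Complex.neg_re, Complex.zero_re] at this
    linarith [hre a, hre b]
  -- gradient with respect to rs k j
  have gradR : ∀ (k : Fin rr) (j : Fin m),
      HasDerivAt
        (fun t : ℂ => h2J H c lam ls (Function.update rs k (Function.update (rs k) j t)))
        (2 * ((ls k ᵥ* Hr (-(lam k))) j - (ls k ᵥ* H (-(lam k))) j))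
        (rs k j) := by
    intro k j
    simp only [h2J]
    have hS1 : HasDerivAt
        (fun t : ℂ => ∑ a, ls a ⬝ᵥ
          (H (-(lam a)) *ᵥ Function.update rs k (Function.update (rs k) j t) a))
        ((ls k ᵥ* H (-(lam k))) j) (rs k j) := by
      have h := HasDerivAt.fun_sum (u := Finset.univ)
        (A := fun a (t : ℂ) => ls a ⬝ᵥ
          (H (-(lam a)) *ᵥ Function.update rs k (Function.update (rs k) j t) a))
        (A' := fun a => if a = k then (ls k ᵥ* H (-(lam k))) j else 0)
        (fun a _ => by
          by_cases hak : a = k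
          · subst hak
            simp only [Function.update_self, eq_self_iff_true, if_true]
            have h0 := hasDerivAt_dot_upd_right (ls a ᵥ* H (-(lam a))) (rs a) j (rs a j)
            simpa only [Matrix.dotProduct_mulVec] using h0
          · simp only [Function.update_of_ne hak, if_neg hak]
            exact hasDerivAt_const _ _)
      simpa only [Finset.sum_ite_eq' Finset.univ k, Finset.mem_univ, if_true] using h
    have hS2 : HasDerivAt
        (fun t : ℂ => ∑ a, ∑ b, (ls a ⬝ᵥ ls b) *
          (Function.update rs k (Function.update (rs k) j t) b ⬝ᵥ
           Function.update rs k (Function.update (rs k) j t) a) / (-(lam a) - lam b))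
        (∑ a, ∑ b,
          ((if b = k then (ls a ⬝ᵥ ls b) * rs a j / (-(lam a) - lam b) else 0) +
           (if a = k then (ls a ⬝ᵥ ls b) * rs b j / (-(lam a) - lam b) else 0)))
        (rs k j) := by
      refine HasDerivAt.fun_sum fun a _ => HasDerivAt.fun_sum fun b _ => ?_
      by_cases hb : b = k <;> by_cases ha : a = k
      · subst hb; subst ha
        simp only [Function.update_self, eq_self_iff_true, if_true]
        have h0 := ((hasDerivAt_dot_upd_both (rs a) j (rs a j)).const_mul
          (ls a ⬝ᵥ ls a)).div_const (-(lam a) - lam a)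
        refine (h0).congr_deriv (Eq.symm ?_)
        ring
      · subst hb
        simp only [Function.update_self, Function.update_of_ne ha, eq_self_iff_true, if_true, if_neg ha]
        have h0 := ((hasDerivAt_dot_upd_left (rs a) (rs b) j (rs b j)).const_mul
          (ls a ⬝ᵥ ls b)).div_const (-(lam a) - lam b)
        refine (h0).congr_deriv (Eq.symm ?_)
        ring
      · subst ha
        simp only [Function.update_self, Function.update_of_ne hb, eq_self_iff_true, if_true, if_neg hb]
        have h0 := ((hasDerivAt_dot_upd_right (rs b) (rs a) j (rs a j)).const_mul
          (ls a ⬝ᵥ ls b)).div_const (-(lam a) - lam b)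
        refine (h0).congr_deriv (Eq.symm ?_)
        ring
      · simp only [Function.update_of_ne ha, Function.update_of_ne hb,
          if_neg ha, if_neg hb, add_zero]
        exact hasDerivAt_const _ _
    have hJ := ((hasDerivAt_const (rs k j) ((c : ℂ))).sub (hS1.const_mul 2)).add hS2
    refine (hJ).congr_deriv (Eq.symm ?_)
    have hHrj : (ls k ᵥ* Hr (-(lam k))) j
        = ∑ b, (-(lam k) - lam b)⁻¹ * (ls k ⬝ᵥ ls b) * rs b j := by
      rw [hHr, vecMul_sum_apply]
    have hcollapse : (∑ a, ∑ b,
          ((if b = k then (ls a ⬝ᵥ ls b) * rs a j / (-(lam a) - lam b) else 0) +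
           (if a = k then (ls a ⬝ᵥ ls b) * rs b j / (-(lam a) - lam b) else 0)))
        = (∑ a, (ls a ⬝ᵥ ls k) * rs a j / (-(lam a) - lam k))
          + ∑ b, (ls k ⬝ᵥ ls b) * rs b j / (-(lam k) - lam b) := by
      simp only [Finset.sum_add_distrib]
      congr 1
      · exact Finset.sum_congr rfl fun a _ => by
          simp [Finset.sum_ite_eq' Finset.univ k]
      · rw [Finset.sum_comm]
        exact Finset.sum_congr rfl fun b _ => by
          simp [Finset.sum_ite_eq' Finset.univ k]
    rw [hcollapse, hHrj]
    have e1 : (∑ a, (ls a ⬝ᵥ ls k) * rs a j / (-(lam a) - lam k))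
        = ∑ a, (-(lam k) - lam a)⁻¹ * (ls k ⬝ᵥ ls a) * rs a j := by
      refine Finset.sum_congr rfl fun a _ => ?_
      rw [dotProduct_comm, show -(lam a) - lam k = -(lam k) - lam a from by ring,
        div_eq_mul_inv]
      ring
    have e2 : (∑ b, (ls k ⬝ᵥ ls b) * rs b j / (-(lam k) - lam b))
        = ∑ b, (-(lam k) - lam b)⁻¹ * (ls k ⬝ᵥ ls b) * rs b j := by
      refine Finset.sum_congr rfl fun b _ => ?_
      rw [div_eq_mul_inv]; ring
    rw [e1, e2]
    ring
  -- gradient with respect to ls k j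
  have gradL : ∀ (k : Fin rr) (j : Fin p),
      HasDerivAt
        (fun t : ℂ => h2J H c lam (Function.update ls k (Function.update (ls k) j t)) rs)
        (2 * ((Hr (-(lam k)) *ᵥ rs k) j - (H (-(lam k)) *ᵥ rs k) j))
        (ls k j) := by
    intro k j
    simp only [h2J]
    have hS1 : HasDerivAt
        (fun t : ℂ => ∑ a, Function.update ls k (Function.update (ls k) j t) a ⬝ᵥ
          (H (-(lam a)) *ᵥ rs a))
        ((H (-(lam k)) *ᵥ rs k) j) (ls k j) := by
      have h := HasDerivAt.fun_sum (u := Finset.univ)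
        (A := fun a (t : ℂ) => Function.update ls k (Function.update (ls k) j t) a ⬝ᵥ
          (H (-(lam a)) *ᵥ rs a))
        (A' := fun a => if a = k then (H (-(lam k)) *ᵥ rs k) j else 0)
        (fun a _ => by
          by_cases hak : a = k
          · subst hak
            simp only [Function.update_self, eq_self_iff_true, if_true]
            exact hasDerivAt_dot_upd_left (H (-(lam a)) *ᵥ rs a) (ls a) j (ls a j)
          · simp only [Function.update_of_ne hak, if_neg hak]
            exact hasDerivAt_const _ _)
      simpa only [Finset.sum_ite_eq' Finset.univ k, Finset.mem_univ, if_true] using h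
    have hS2 : HasDerivAt
        (fun t : ℂ => ∑ a, ∑ b,
          (Function.update ls k (Function.update (ls k) j t) a ⬝ᵥ
           Function.update ls k (Function.update (ls k) j t) b) *
          (rs b ⬝ᵥ rs a) / (-(lam a) - lam b))
        (∑ a, ∑ b,
          ((if a = k then ls b j * (rs b ⬝ᵥ rs a) / (-(lam a) - lam b) else 0) +
           (if b = k then ls a j * (rs b ⬝ᵥ rs a) / (-(lam a) - lam b) else 0)))
        (ls k j) := by
      refine HasDerivAt.fun_sum fun a _ => HasDerivAt.fun_sum fun b _ => ?_
      by_cases ha : a = k <;> by_cases hb : b = k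
      · subst ha; subst hb
        simp only [Function.update_self, eq_self_iff_true, if_true]
        have h0 := ((hasDerivAt_dot_upd_both (ls b) j (ls b j)).mul_const
          (rs b ⬝ᵥ rs b)).div_const (-(lam b) - lam b)
        refine (h0).congr_deriv (Eq.symm ?_)
        ring
      · subst ha
        simp only [Function.update_self, Function.update_of_ne hb, eq_self_iff_true, if_true, if_neg hb]
        have h0 := ((hasDerivAt_dot_upd_left (ls b) (ls a) j (ls a j)).mul_const
          (rs b ⬝ᵥ rs a)).div_const (-(lam a) - lam b)
        refine (h0).congr_deriv (Eq.symm ?_)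
        ring
      · subst hb
        simp only [Function.update_self, Function.update_of_ne ha, eq_self_iff_true, if_true, if_neg ha]
        have h0 := ((hasDerivAt_dot_upd_right (ls a) (ls b) j (ls b j)).mul_const
          (rs b ⬝ᵥ rs a)).div_const (-(lam a) - lam b)
        refine (h0).congr_deriv (Eq.symm ?_)
        ring
      · simp only [Function.update_of_ne ha, Function.update_of_ne hb,
          if_neg ha, if_neg hb, add_zero]
        exact hasDerivAt_const _ _
    have hJ := ((hasDerivAt_const (ls k j) ((c : ℂ))).sub (hS1.const_mul 2)).add hS2
    refine (hJ).congr_deriv (Eq.symm ?_)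
    have hHrj : (Hr (-(lam k)) *ᵥ rs k) j
        = ∑ b, (-(lam k) - lam b)⁻¹ * ls b j * (rs b ⬝ᵥ rs k) := by
      rw [hHr, mulVec_sum_apply]
    have hcollapse : (∑ a, ∑ b,
          ((if a = k then ls b j * (rs b ⬝ᵥ rs a) / (-(lam a) - lam b) else 0) +
           (if b = k then ls a j * (rs b ⬝ᵥ rs a) / (-(lam a) - lam b) else 0)))
        = (∑ b, ls b j * (rs b ⬝ᵥ rs k) / (-(lam k) - lam b))
          + ∑ a, ls a j * (rs k ⬝ᵥ rs a) / (-(lam a) - lam k) := by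
      simp only [Finset.sum_add_distrib]
      congr 1
      · rw [Finset.sum_comm]
        exact Finset.sum_congr rfl fun b _ => by
          simp [Finset.sum_ite_eq' Finset.univ k]
      · exact Finset.sum_congr rfl fun a _ => by
          simp [Finset.sum_ite_eq' Finset.univ k]
    rw [hcollapse, hHrj]
    have e1 : (∑ b, ls b j * (rs b ⬝ᵥ rs k) / (-(lam k) - lam b))
        = ∑ b, (-(lam k) - lam b)⁻¹ * ls b j * (rs b ⬝ᵥ rs k) := by
      refine Finset.sum_congr rfl fun b _ => ?_
      rw [div_eq_mul_inv]; ring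
    have e2 : (∑ a, ls a j * (rs k ⬝ᵥ rs a) / (-(lam a) - lam k))
        = ∑ a, (-(lam k) - lam a)⁻¹ * ls a j * (rs a ⬝ᵥ rs k) := by
      refine Finset.sum_congr rfl fun a _ => ?_
      rw [dotProduct_comm, show -(lam a) - lam k = -(lam k) - lam a from by ring,
        div_eq_mul_inv]
      ring
    rw [e1, e2]
    ring
  -- gradient with respect to lam k
  have gradP : ∀ k : Fin rr,
      HasDerivAt (fun t : ℂ => h2J H c (Function.update lam k t) ls rs)
        (2 * (ls k ⬝ᵥ (H' (-(lam k)) *ᵥ rs k) - ls k ⬝ᵥ (Hr' (-(lam k)) *ᵥ rs k)))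
        (lam k) := by
    intro k
    simp only [h2J]
    have hHterm : HasDerivAt (fun t : ℂ => ls k ⬝ᵥ (H (-t) *ᵥ rs k))
        (-(ls k ⬝ᵥ (H' (-(lam k)) *ᵥ rs k))) (lam k) := by
      have hent : ∀ (i : Fin p) (b : Fin m),
          HasDerivAt (fun t : ℂ => H (-t) i b) (H' (-(lam k)) i b * (-1)) (lam k) := by
        intro i b
        have h1 := (hH' k i b).comp (lam k) (hasDerivAt_neg (lam k))
        simpa [Function.comp_def] using h1
      have hs := HasDerivAt.fun_sum (u := Finset.univ)
        (A := fun (i : Fin p) (t : ℂ) => ls k i * ∑ b, H (-t) i b * rs k b)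
        (A' := fun i => ls k i * ∑ b, H' (-(lam k)) i b * (-1) * rs k b)
        (fun i _ => (HasDerivAt.fun_sum (fun b _ => (hent i b).mul_const (rs k b))).const_mul
          (ls k i))
      have hfun : (fun t : ℂ => ls k ⬝ᵥ (H (-t) *ᵥ rs k))
          = fun t : ℂ => ∑ i, ls k i * ∑ b, H (-t) i b * rs k b := by
        funext t; simp [dotProduct, mulVec]
      rw [hfun]
      refine (hs).congr_deriv (Eq.symm ?_)
      simp only [dotProduct, mulVec, Finset.mul_sum, ← Finset.sum_neg_distrib]
      refine Finset.sum_congr rfl fun i _ => Finset.sum_congr rfl fun b _ => by ring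
    have hS1 : HasDerivAt
        (fun t : ℂ => ∑ a, ls a ⬝ᵥ (H (-(Function.update lam k t a)) *ᵥ rs a))
        (-(ls k ⬝ᵥ (H' (-(lam k)) *ᵥ rs k))) (lam k) := by
      have h := HasDerivAt.fun_sum (u := Finset.univ)
        (A := fun a (t : ℂ) => ls a ⬝ᵥ (H (-(Function.update lam k t a)) *ᵥ rs a))
        (A' := fun a => if a = k then -(ls k ⬝ᵥ (H' (-(lam k)) *ᵥ rs k)) else 0)
        (fun a _ => by
          by_cases hak : a = k
          · subst hak
            simp only [Function.update_self, eq_self_iff_true, if_true]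
            exact hHterm
          · simp only [Function.update_of_ne hak, if_neg hak]
            exact hasDerivAt_const _ _)
      simpa only [Finset.sum_ite_eq' Finset.univ k, Finset.mem_univ, if_true] using h
    have hS2 : HasDerivAt
        (fun t : ℂ => ∑ a, ∑ b, (ls a ⬝ᵥ ls b) * (rs b ⬝ᵥ rs a) /
          (-(Function.update lam k t a) - Function.update lam k t b))
        (∑ a, ∑ b,
          ((if a = k then (ls a ⬝ᵥ ls b) * (rs b ⬝ᵥ rs a) * (((-(lam a) - lam b) ^ 2)⁻¹)
              else 0) +
           (if b = k then (ls a ⬝ᵥ ls b) * (rs b ⬝ᵥ rs a) * (((-(lam a) - lam b) ^ 2)⁻¹)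
              else 0)))
        (lam k) := by
      refine HasDerivAt.fun_sum fun a _ => HasDerivAt.fun_sum fun b _ => ?_
      by_cases ha : a = k <;> by_cases hb : b = k
      · subst ha; subst hb
        simp only [Function.update_self, eq_self_iff_true, if_true]
        have hg : HasDerivAt (fun t : ℂ => -t - t) (-1 - 1) (lam b) :=
          (hasDerivAt_neg (lam b)).sub (hasDerivAt_id (lam b))
        have h0 := (hasDerivAt_const (lam b) ((ls b ⬝ᵥ ls b) * (rs b ⬝ᵥ rs b))).div hg
          (hden b b)
        refine (h0).congr_deriv (Eq.symm ?_)
        field_simp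
        ring
      · subst ha
        simp only [Function.update_self, Function.update_of_ne hb, eq_self_iff_true, if_true, if_neg hb,
          add_zero]
        have hg : HasDerivAt (fun t : ℂ => -t - lam b) (-1) (lam a) := by
          simpa using (hasDerivAt_neg (lam a)).sub_const (lam b)
        have h0 := (hasDerivAt_const (lam a) ((ls a ⬝ᵥ ls b) * (rs b ⬝ᵥ rs a))).div hg
          (hden a b)
        refine (h0).congr_deriv (Eq.symm ?_)
        field_simp
        ring
      · subst hb
        simp only [Function.update_self, Function.update_of_ne ha, eq_self_iff_true, if_true, if_neg ha,
          zero_add]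
        have hg : HasDerivAt (fun t : ℂ => -(lam a) - t) (-1) (lam b) := by
          simpa using (hasDerivAt_id (lam b)).const_sub (-(lam a))
        have h0 := (hasDerivAt_const (lam b) ((ls a ⬝ᵥ ls b) * (rs b ⬝ᵥ rs a))).div hg
          (hden a b)
        refine (h0).congr_deriv (Eq.symm ?_)
        field_simp
        ring
      · simp only [Function.update_of_ne ha, Function.update_of_ne hb,
          if_neg ha, if_neg hb, add_zero]
        exact hasDerivAt_const _ _
    have hJ := ((hasDerivAt_const (lam k) ((c : ℂ))).sub (hS1.const_mul 2)).add hS2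
    refine (hJ).congr_deriv (Eq.symm ?_)
    have hHr'dot : ls k ⬝ᵥ (Hr' (-(lam k)) *ᵥ rs k)
        = -∑ b, ((-(lam k) - lam b) ^ 2)⁻¹ * (ls k ⬝ᵥ ls b) * (rs b ⬝ᵥ rs k) := by
      rw [hHr', Matrix.neg_mulVec, dotProduct_neg, dot_sum_mulVec]
    have hcollapse : (∑ a, ∑ b,
          ((if a = k then (ls a ⬝ᵥ ls b) * (rs b ⬝ᵥ rs a) * (((-(lam a) - lam b) ^ 2)⁻¹)
              else 0) +
           (if b = k then (ls a ⬝ᵥ ls b) * (rs b ⬝ᵥ rs a) * (((-(lam a) - lam b) ^ 2)⁻¹)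
              else 0)))
        = (∑ b, (ls k ⬝ᵥ ls b) * (rs b ⬝ᵥ rs k) * (((-(lam k) - lam b) ^ 2)⁻¹))
          + ∑ a, (ls a ⬝ᵥ ls k) * (rs k ⬝ᵥ rs a) * (((-(lam a) - lam k) ^ 2)⁻¹) := by
      simp only [Finset.sum_add_distrib]
      congr 1
      · rw [Finset.sum_comm]
        exact Finset.sum_congr rfl fun b _ => by
          simp [Finset.sum_ite_eq' Finset.univ k]
      · exact Finset.sum_congr rfl fun a _ => by
          simp [Finset.sum_ite_eq' Finset.univ k]
    rw [hcollapse, hHr'dot]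
    have e1 : (∑ a, (ls a ⬝ᵥ ls k) * (rs k ⬝ᵥ rs a) * (((-(lam a) - lam k) ^ 2)⁻¹))
        = ∑ a, ((-(lam k) - lam a) ^ 2)⁻¹ * (ls k ⬝ᵥ ls a) * (rs a ⬝ᵥ rs k) := by
      refine Finset.sum_congr rfl fun a _ => ?_
      rw [dotProduct_comm (ls a), dotProduct_comm (rs k),
        show -(lam a) - lam k = -(lam k) - lam a from by ring]
      ring
    have e2 : (∑ b, (ls k ⬝ᵥ ls b) * (rs b ⬝ᵥ rs k) * (((-(lam k) - lam b) ^ 2)⁻¹))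
        = ∑ b, ((-(lam k) - lam b) ^ 2)⁻¹ * (ls k ⬝ᵥ ls b) * (rs b ⬝ᵥ rs k) := by
      exact Finset.sum_congr rfl fun b _ => by ring
    rw [e1, e2]
    ring
  refine ⟨gradR, gradL, fun h1 h2 h3 => ⟨?_, ?_, ?_⟩⟩
  · intro k
    funext j
    have h0 := h2 k j
    rw [(gradL k j).deriv] at h0
    have := mul_eq_zero.mp h0
    rcases this with h | h
    · exact absurd h two_ne_zero
    · linear_combination -h
  · intro k
    funext j
    have h0 := h1 k j
    rw [(gradR k j).deriv] at h0
    have := mul_eq_zero.mp h0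
    rcases this with h | h
    · exact absurd h two_ne_zero
    · linear_combination -h
  · intro k
    have h0 := h3 k
    rw [(gradP k).deriv] at h0
    have := mul_eq_zero.mp h0
    rcases this with h | h
    · exact absurd h two_ne_zero
    · linear_combination h
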